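/- The Normalized Directed Sheaf Hypergraph Laplacian L_N is positive semidefinite, i.e., L_N is Hermitian and x† L_N x ≥ 0 for every x ∈ ℂ^{nd}. -/

import Mathlib

open Matrix Complex Finset
open scoped ComplexOrder

noncomputable section

variable {V E : Type*} [Fintype V] [DecidableEq V] [Fintype E] [DecidableEq E] {d : ℕ}

/-- The vertex set of a hyperedge `e`: the union of its tail set `T e` and head set `Hd e`. -/
def everts (T Hd : E → Finset V) (e : E) : Finset V := T e ∪ Hd e

/-- The degree `δ_e` of a hyperedge. -/
def edeg (T Hd : E → Finset V) (e : E) : ℕ := (everts T Hd e).card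

/-- The directional scalar `S^{(q)}_{u ⊴ e}`. -/
def dirS (T Hd : E → Finset V) (q : ℝ) (e : E) (u : V) : ℂ :=
  if u ∈ Hd e then 1
  else if u ∈ T e then Complex.exp (-(2 * Real.pi * q) * Complex.I)
  else 0

/-- The complex restriction map `F⃗_{u ⊴ e} = S^{(q)}_{u ⊴ e} • F_{u ⊴ e}`. -/
def Fdir (T Hd : E → Finset V) (q : ℝ) (F : V → E → Matrix (Fin d) (Fin d) ℝ)
    (u : V) (e : E) : Matrix (Fin d) (Fin d) ℂ :=
  dirS T Hd q e u • (F u e).map (fun a => (a : ℂ))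

/-- The block incidence matrix `B^{(q)} ∈ ℂ^{md × nd}`. -/
def Bmat (T Hd : E → Finset V) (q : ℝ) (F : V → E → Matrix (Fin d) (Fin d) ℝ) :
    Matrix (E × Fin d) (V × Fin d) ℂ :=
  Matrix.of fun p r =>
    if r.1 ∈ everts T Hd p.1 then Fdir T Hd q F r.1 p.1 p.2 r.2 else 0

/-- The block diagonal matrix `D_E^{-1}`, with blocks `δ_e⁻¹ • I_d`. -/
def DEinv (T Hd : E → Finset V) (d : ℕ) : Matrix (E × Fin d) (E × Fin d) ℂ :=
  Matrix.diagonal fun p => ((edeg T Hd p.1 : ℂ))⁻¹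

/-- The node degree block `D_u = Σ_{e : u ∈ e} F_{u⊴e}ᵀ F_{u⊴e}`. -/
def Dblk (T Hd : E → Finset V) (F : V → E → Matrix (Fin d) (Fin d) ℝ) (u : V) :
    Matrix (Fin d) (Fin d) ℝ :=
  ∑ e ∈ Finset.univ.filter (fun e => u ∈ everts T Hd e), (F u e)ᵀ * F u e

/-- The block diagonal node degree matrix `D_V ∈ ℝ^{nd×nd}` (viewed as a complex matrix). -/
def DVmat (T Hd : E → Finset V) (F : V → E → Matrix (Fin d) (Fin d) ℝ) :
    Matrix (V × Fin d) (V × Fin d) ℂ :=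
  Matrix.of fun p r => if p.1 = r.1 then ((Dblk T Hd F p.1 p.2 r.2 : ℝ) : ℂ) else 0

/-- The Directed Sheaf Hypergraph Laplacian `L = D_V − B^{(q)†} D_E^{-1} B^{(q)}`. -/
def Lap (T Hd : E → Finset V) (q : ℝ) (F : V → E → Matrix (Fin d) (Fin d) ℝ) :
    Matrix (V × Fin d) (V × Fin d) ℂ :=
  DVmat T Hd F - (Bmat T Hd q F)ᴴ * DEinv T Hd d * Bmat T Hd q F

/-- The block diagonal matrix with blocks `(R u)⁻¹`; when `R u` is the positive square root
of `D_u`, this is `D_V^{-1/2}`. -/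
def Pinv (R : V → Matrix (Fin d) (Fin d) ℂ) : Matrix (V × Fin d) (V × Fin d) ℂ :=
  Matrix.of fun p r => if p.1 = r.1 then (R p.1)⁻¹ p.2 r.2 else 0

/-- The Normalized Directed Sheaf Hypergraph Laplacian `L_N = D_V^{-1/2} L D_V^{-1/2}`. -/
def LapN (T Hd : E → Finset V) (q : ℝ) (F : V → E → Matrix (Fin d) (Fin d) ℝ)
    (R : V → Matrix (Fin d) (Fin d) ℂ) : Matrix (V × Fin d) (V × Fin d) ℂ :=
  Pinv R * Lap T Hd q F * Pinv R


-- auxiliary lemmas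

lemma aux_normSq_dirS (T Hd : E → Finset V) (q : ℝ) {e : E} {u : V}
    (h : u ∈ everts T Hd e) : Complex.normSq (dirS T Hd q e u) = 1 := by
  unfold dirS
  rcases Finset.mem_union.mp h with h1 | h1
  · by_cases h2 : u ∈ Hd e
    · simp [h2]
    · rw [if_neg h2, if_pos h1]
      have : (-(2 * (Real.pi:ℂ) * (q:ℂ)) * Complex.I)
          = ((-(2 * Real.pi * q) : ℝ) : ℂ) * Complex.I := by push_cast; ring
      rw [← Complex.sq_norm, this, Complex.norm_exp_ofReal_mul_I]
      norm_num
  · simp [h1]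

lemma aux_cs {α : Type*} (s : Finset α) (y : α → ℂ) :
    Complex.normSq (∑ u ∈ s, y u) ≤ (s.card : ℝ) * ∑ u ∈ s, Complex.normSq (y u) := by
  have h1 : ‖∑ u ∈ s, y u‖ ≤ ∑ u ∈ s, ‖y u‖ := by
    simpa using norm_sum_le s y
  have h2 : (∑ u ∈ s, ‖y u‖) ^ 2
      ≤ (s.card : ℝ) * ∑ u ∈ s, ‖y u‖ ^ 2 := by
    have := Finset.sum_mul_sq_le_sq_mul_sq s (fun _ => (1:ℝ)) (fun u => ‖y u‖)
    simpa using this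
  calc Complex.normSq (∑ u ∈ s, y u) = ‖∑ u ∈ s, y u‖ ^ 2 := (Complex.sq_norm _).symm
    _ ≤ (∑ u ∈ s, ‖y u‖) ^ 2 := pow_le_pow_left₀ (norm_nonneg _) h1 2
    _ ≤ (s.card : ℝ) * ∑ u ∈ s, ‖y u‖ ^ 2 := h2
    _ = (s.card : ℝ) * ∑ u ∈ s, Complex.normSq (y u) := by simp [Complex.sq_norm]

lemma aux_sum_mulVec {ι n m : Type*} [Fintype n] (s : Finset ι)
    (M : ι → Matrix m n ℂ) (v : n → ℂ) :
    (∑ e ∈ s, M e) *ᵥ v = ∑ e ∈ s, (M e) *ᵥ v := by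
  ext i
  simp only [Matrix.mulVec, dotProduct, Matrix.sum_apply, Finset.sum_apply, Finset.sum_mul]
  exact Finset.sum_comm

lemma aux_dotProduct_sum {ι n : Type*} [Fintype n] (s : Finset ι)
    (w : n → ℂ) (f : ι → n → ℂ) :
    w ⬝ᵥ (∑ e ∈ s, f e) = ∑ e ∈ s, w ⬝ᵥ f e := by
  simp only [dotProduct, Finset.sum_apply, Finset.mul_sum]
  exact Finset.sum_comm

lemma aux_DEinv_herm (T Hd : E → Finset V) : (DEinv T Hd d)ᴴ = DEinv T Hd d := by
  ext p r
  simp only [Matrix.conjTranspose_apply, DEinv, Matrix.diagonal_apply]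
  by_cases h : p = r
  · subst h; simp
  · simp [h, Ne.symm h]

lemma aux_Dblk_symm (T Hd : E → Finset V) (F : V → E → Matrix (Fin d) (Fin d) ℝ) (u : V) :
    (Dblk T Hd F u)ᵀ = Dblk T Hd F u := by
  unfold Dblk
  rw [Matrix.transpose_sum]
  exact Finset.sum_congr rfl fun e _ => by
    rw [Matrix.transpose_mul, Matrix.transpose_transpose]

lemma aux_DVmat_herm (T Hd : E → Finset V) (F : V → E → Matrix (Fin d) (Fin d) ℝ) :
    (DVmat T Hd F).IsHermitian := by
  ext p r
  simp only [Matrix.conjTranspose_apply, DVmat, Matrix.of_apply]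
  by_cases h : p.1 = r.1
  · rw [if_pos h.symm, if_pos h, ← h]
    have h2 := congrFun (congrFun (aux_Dblk_symm T Hd F p.1) p.2) r.2
    rw [Matrix.transpose_apply] at h2
    rw [← h2]
    exact Complex.conj_ofReal _
  · rw [if_neg (fun hh => h hh.symm), if_neg h, star_zero]

lemma aux_Pinv_herm (R : V → Matrix (Fin d) (Fin d) ℂ) (h : ∀ u, (R u).IsHermitian) :
    (Pinv R)ᴴ = Pinv R := by
  ext p r
  simp only [Matrix.conjTranspose_apply, Pinv, Matrix.of_apply]
  by_cases h1 : p.1 = r.1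
  · rw [if_pos h1.symm, if_pos h1, ← h1]
    exact (h p.1).inv.apply p.2 r.2
  · rw [if_neg (fun hh => h1 hh.symm), if_neg h1, star_zero]

lemma aux_Bx_apply (T Hd : E → Finset V) (q : ℝ) (F : V → E → Matrix (Fin d) (Fin d) ℝ)
    (x : V × Fin d → ℂ) (e : E) (i : Fin d) :
    (Bmat T Hd q F *ᵥ x) (e, i)
      = ∑ u ∈ everts T Hd e, dirS T Hd q e u * ∑ j, ((F u e i j : ℂ)) * x (u, j) := by
  simp only [Matrix.mulVec, dotProduct, Bmat, Matrix.of_apply, Fdir, Matrix.smul_apply,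
    Matrix.map_apply, smul_eq_mul]
  rw [Fintype.sum_prod_type]
  have h1 : ∀ u : V, (∑ j, (if u ∈ everts T Hd e then
        dirS T Hd q e u * ((F u e i j : ℝ) : ℂ) else 0) * x (u, j))
      = if u ∈ everts T Hd e then dirS T Hd q e u * ∑ j, ((F u e i j : ℂ)) * x (u, j)
        else 0 := by
    intro u
    by_cases hu : u ∈ everts T Hd e <;>
      simp [hu, Finset.mul_sum, mul_assoc]
  rw [Finset.sum_congr rfl fun u _ => h1 u]
  rw [Finset.sum_ite_mem, Finset.univ_inter]

-- quadDV and quadB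
section Part2
variable (T Hd : E → Finset V) (q : ℝ) (F : V → E → Matrix (Fin d) (Fin d) ℝ)

lemma aux_quadDV (x : V × Fin d → ℂ) :
    star x ⬝ᵥ (DVmat T Hd F *ᵥ x)
      = ∑ u, ∑ e ∈ Finset.univ.filter (fun e => u ∈ everts T Hd e), ∑ k,
          ((Complex.normSq (∑ j, ((F u e k j : ℂ)) * x (u, j)) : ℝ) : ℂ) := by
  have h1 : star x ⬝ᵥ (DVmat T Hd F *ᵥ x)
      = ∑ u, (star (fun i => x (u, i)) ⬝ᵥ
          (((Dblk T Hd F u).map (fun a => (a : ℂ))) *ᵥ (fun i => x (u, i)))) := by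
    simp only [dotProduct, Matrix.mulVec, DVmat, Matrix.of_apply, Pi.star_apply,
      Matrix.map_apply]
    rw [Fintype.sum_prod_type]
    refine Finset.sum_congr rfl fun u _ => Finset.sum_congr rfl fun i _ => ?_
    congr 1
    rw [Fintype.sum_prod_type]
    simp only [ite_mul, zero_mul]
    rw [Finset.sum_comm]
    simp [Finset.sum_ite_eq]
  rw [h1]
  refine Finset.sum_congr rfl fun u _ => ?_
  have hM : (Dblk T Hd F u).map (fun a => (a : ℂ))
      = ∑ e ∈ Finset.univ.filter (fun e => u ∈ everts T Hd e),
          ((F u e).map (fun a => (a : ℂ)))ᴴ * ((F u e).map (fun a => (a : ℂ))) := by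
    unfold Dblk
    ext i j
    simp only [Matrix.map_apply, Matrix.sum_apply, Matrix.mul_apply,
      Matrix.conjTranspose_apply, Matrix.transpose_apply, Complex.star_def,
      Complex.conj_ofReal]
    push_cast
    rfl
  rw [hM, aux_sum_mulVec, aux_dotProduct_sum]
  refine Finset.sum_congr rfl fun e _ => ?_
  rw [← Matrix.mulVec_mulVec, dotProduct_mulVec, ← star_mulVec]
  simp only [dotProduct, Pi.star_apply]
  refine Finset.sum_congr rfl fun k _ => ?_
  rw [Complex.normSq_eq_conj_mul_self]
  congr 1

lemma aux_quadB (x : V × Fin d → ℂ) :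
    star x ⬝ᵥ (((Bmat T Hd q F)ᴴ * DEinv T Hd d * Bmat T Hd q F) *ᵥ x)
      = ∑ e, (((edeg T Hd e : ℝ)⁻¹ : ℝ) : ℂ) *
          ∑ i, ((Complex.normSq ((Bmat T Hd q F *ᵥ x) (e, i)) : ℝ) : ℂ) := by
  rw [← Matrix.mulVec_mulVec, ← Matrix.mulVec_mulVec, dotProduct_mulVec, ← star_mulVec]
  set y := Bmat T Hd q F *ᵥ x with hy
  have : ∀ p : E × Fin d, star y p * (DEinv T Hd d *ᵥ y) p
      = (((edeg T Hd p.1 : ℝ)⁻¹ : ℝ) : ℂ) * ((Complex.normSq (y p) : ℝ) : ℂ) := by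
    intro p
    simp only [DEinv, Pi.star_apply, Complex.star_def]
    rw [Matrix.mulVec_diagonal, Complex.normSq_eq_conj_mul_self]
    push_cast
    ring
  rw [show star y ⬝ᵥ (DEinv T Hd d *ᵥ y) = ∑ p, star y p * (DEinv T Hd d *ᵥ y) p from rfl]
  rw [Finset.sum_congr rfl fun p _ => this p]
  rw [Fintype.sum_prod_type]
  refine Finset.sum_congr rfl fun e _ => ?_
  dsimp only
  rw [← Finset.mul_sum]

end Part2
section Part3
variable (T Hd : E → Finset V) (q : ℝ) (F : V → E → Matrix (Fin d) (Fin d) ℝ)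

lemma aux_Lap_herm : (Lap T Hd q F).IsHermitian := by
  unfold Lap
  exact (aux_DVmat_herm T Hd F).sub
    (Matrix.isHermitian_conjTranspose_mul_mul _ (aux_DEinv_herm T Hd))

lemma aux_Lap_psd (hne : ∀ e, (everts T Hd e).Nonempty) :
    (Lap T Hd q F).PosSemidef := by
  rw [Matrix.posSemidef_iff_dotProduct_mulVec]
  constructor
  · exact aux_Lap_herm T Hd q F
  · intro x
    rw [Lap, Matrix.sub_mulVec, dotProduct_sub, aux_quadDV, aux_quadB]
    set a : ℝ := ∑ u, ∑ e ∈ Finset.univ.filter (fun e => u ∈ everts T Hd e), ∑ k,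
        Complex.normSq (∑ j, ((F u e k j : ℂ)) * x (u, j)) with ha
    set b : ℝ := ∑ e, (edeg T Hd e : ℝ)⁻¹ *
        ∑ i, Complex.normSq ((Bmat T Hd q F *ᵥ x) (e, i)) with hb
    have hA : ∑ u, ∑ e ∈ Finset.univ.filter (fun e => u ∈ everts T Hd e), ∑ k,
        ((Complex.normSq (∑ j, ((F u e k j : ℂ)) * x (u, j)) : ℝ) : ℂ) = ((a : ℝ) : ℂ) := by
      rw [ha]; push_cast; rfl
    have hB : ∑ e, (((edeg T Hd e : ℝ)⁻¹ : ℝ) : ℂ) *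
        ∑ i, ((Complex.normSq ((Bmat T Hd q F *ᵥ x) (e, i)) : ℝ) : ℂ) = ((b : ℝ) : ℂ) := by
      rw [hb]; push_cast; rfl
    rw [hA, hB, ← Complex.ofReal_sub]
    rw [Complex.zero_le_real]
    refine sub_nonneg.mpr ?_
    have key : ∀ e, (edeg T Hd e : ℝ)⁻¹ * ∑ i, Complex.normSq ((Bmat T Hd q F *ᵥ x) (e, i))
        ≤ ∑ u ∈ everts T Hd e, ∑ k,
            Complex.normSq (∑ j, ((F u e k j : ℂ)) * x (u, j)) := by
      intro e
      have hcard : (0 : ℝ) < (edeg T Hd e : ℝ) := by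
        exact_mod_cast Finset.card_pos.mpr (hne e)
      have hstep : ∀ i, Complex.normSq ((Bmat T Hd q F *ᵥ x) (e, i))
          ≤ (edeg T Hd e : ℝ) * ∑ u ∈ everts T Hd e,
              Complex.normSq (∑ j, ((F u e i j : ℂ)) * x (u, j)) := by
        intro i
        rw [aux_Bx_apply]
        refine (aux_cs (everts T Hd e)
          (fun u => dirS T Hd q e u * ∑ j, ((F u e i j : ℂ)) * x (u, j))).trans
          (le_of_eq ?_)
        congr 1
        refine Finset.sum_congr rfl fun u hu => ?_
        rw [Complex.normSq_mul, aux_normSq_dirS T Hd q hu, one_mul]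
      calc (edeg T Hd e : ℝ)⁻¹ * ∑ i, Complex.normSq ((Bmat T Hd q F *ᵥ x) (e, i))
          ≤ (edeg T Hd e : ℝ)⁻¹ * ∑ i, ((edeg T Hd e : ℝ) * ∑ u ∈ everts T Hd e,
              Complex.normSq (∑ j, ((F u e i j : ℂ)) * x (u, j))) :=
            mul_le_mul_of_nonneg_left (Finset.sum_le_sum fun i _ => hstep i)
              (inv_nonneg.mpr hcard.le)
        _ = ∑ i, ∑ u ∈ everts T Hd e,
              Complex.normSq (∑ j, ((F u e i j : ℂ)) * x (u, j)) := by
            rw [← Finset.mul_sum, ← mul_assoc, inv_mul_cancel₀ (ne_of_gt hcard), one_mul]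
        _ = ∑ u ∈ everts T Hd e, ∑ k,
              Complex.normSq (∑ j, ((F u e k j : ℂ)) * x (u, j)) := Finset.sum_comm
    have hswap : a = ∑ e, ∑ u ∈ everts T Hd e, ∑ k,
        Complex.normSq (∑ j, ((F u e k j : ℂ)) * x (u, j)) := by
      rw [ha]
      rw [Finset.sum_congr rfl fun u (_ : u ∈ Finset.univ) => Finset.sum_filter
        (fun e => u ∈ everts T Hd e)
        (fun e => ∑ k, Complex.normSq (∑ j, ((F u e k j : ℂ)) * x (u, j)))]
      rw [Finset.sum_comm]
      refine Finset.sum_congr rfl fun e _ => ?_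
      rw [Finset.sum_ite_mem, Finset.univ_inter]
    rw [hb, hswap]
    exact Finset.sum_le_sum fun e _ => key e

end Part3


/-- The Normalized Directed Sheaf Hypergraph Laplacian is positive semidefinite:
it is Hermitian and `x† L_N x ≥ 0` for every `x ∈ ℂ^{nd}`. -/
theorem normalized_directed_sheaf_laplacian_posSemidef
    (T Hd : E → Finset V) (q : ℝ) (F : V → E → Matrix (Fin d) (Fin d) ℝ)
    (R : V → Matrix (Fin d) (Fin d) ℂ)
    (hd : 0 < d)
    (hdisj : ∀ e, Disjoint (T e) (Hd e))
    (hne : ∀ e, (everts T Hd e).Nonempty)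
    (hpos : ∀ u, (Dblk T Hd F u).PosDef)
    (hR : ∀ u, (R u).PosSemidef)
    (hRsq : ∀ u, R u * R u = (Dblk T Hd F u).map (fun a => (a : ℂ))) :
    (LapN T Hd q F R).PosSemidef := by
  have hLap : (Lap T Hd q F).PosSemidef := aux_Lap_psd T Hd q F hne
  have hP : (Pinv R)ᴴ = Pinv R := aux_Pinv_herm R (fun u => (hR u).1)
  have h2 := hLap.conjTranspose_mul_mul_same (Pinv R)
  rw [hP] at h2
  exact h2

end
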